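/- Let γ : [0, ℓ] → ℝ² be an arclength-parametrized curve of class H² with ℓ > 0, and let θ = arccos⟨γ'(0), γ'(ℓ)⟩ ∈ [0, π] be the angle between its unit tangent vectors at the two endpoints. Then the elastic energy satisfies ∫₀^ℓ |γ''(s)|² ds + ℓ ≥ 2θ. In particular, ∫₀^ℓ |γ''(s)|² ds + ℓ ≥ (∫₀^ℓ |γ''| ds)²/ℓ + ℓ ≥ 2 ∫₀^ℓ |γ''| ds ≥ 2θ. -/

import Mathlib

open MeasureTheory Set
open scoped RealInnerProductSpace

namespace EnergyAngleAux

noncomputable def toC (u : EuclideanSpace ℝ (Fin 2)) : ℂ := ⟨u 0, u 1⟩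

lemma normSq_toC (u : EuclideanSpace ℝ (Fin 2)) : Complex.normSq (toC u) = ‖u‖ ^ 2 := by
  have h : ‖u‖ ^ 2 = ∑ i, ‖u i‖ ^ 2 := by
    rw [EuclideanSpace.norm_eq]
    exact Real.sq_sqrt (by positivity)
  rw [h, Fin.sum_univ_two, Complex.normSq_apply]
  simp [toC, sq_abs, sq]

lemma abs_toC (u : EuclideanSpace ℝ (Fin 2)) (hu : ‖u‖ = 1) : ‖toC u‖ = 1 := by
  rw [Complex.norm_def, normSq_toC, hu]
  simp

lemma inner_toC (u v : EuclideanSpace ℝ (Fin 2)) :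
    ⟪u, v⟫ = ((starRingEnd ℂ) (toC u) * toC v).re := by
  simp [PiLp.inner_apply, RCLike.inner_apply, Fin.sum_univ_two, Complex.mul_re, toC]
  ring

lemma toC_sub (u v : EuclideanSpace ℝ (Fin 2)) : toC (u - v) = toC u - toC v := by
  apply Complex.ext <;> simp [toC]

lemma arccos_re_eq_abs_arg {z : ℂ} (hz : ‖z‖ = 1) :
    Real.arccos z.re = |z.arg| := by
  have hz0 : z ≠ 0 := by
    intro h; rw [h] at hz; simp at hz
  have hre : Real.cos z.arg = z.re := by
    rw [Complex.cos_arg hz0, hz, div_one]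
  rcases le_or_gt 0 z.arg with h | h
  · rw [← hre, Real.arccos_cos h (Complex.arg_le_pi z), _root_.abs_of_nonneg h]
  · have h1 : Real.cos z.arg = Real.cos (-z.arg) := (Real.cos_neg _).symm
    rw [← hre, h1, Real.arccos_cos (by linarith) (by linarith [Complex.neg_pi_lt_arg z]),
      _root_.abs_of_neg h]

lemma abs_arg_mul_le {a b : ℂ} (ha : a ≠ 0) (hb : b ≠ 0) :
    |(a * b).arg| ≤ |a.arg| + |b.arg| := by
  rcases le_or_gt Real.pi (|a.arg| + |b.arg|) with h | h
  · exact le_trans (Complex.abs_arg_le_pi _) h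
  · have habs : |a.arg + b.arg| < Real.pi := lt_of_le_of_lt (abs_add_le _ _) h
    rw [abs_lt] at habs
    rw [Complex.arg_mul ha hb ⟨habs.1, habs.2.le⟩]
    exact abs_add_le _ _

lemma key_ineq {s : ℝ} (h0 : 0 ≤ s) (h6 : s ≤ Real.pi / 6) :
    2 * s ≤ 2 * Real.sin s + 8 * Real.sin s ^ 3 := by
  rcases eq_or_lt_of_le h0 with h | h
  · simp [← h]
  · have hs1 : s ≤ 1 := by nlinarith [Real.pi_lt_d2]
    have hcube := Real.sin_gt_sub_cube h
    have h53 : s ≤ 0.525 := by nlinarith [Real.pi_lt_d2]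
    have hsq : s ^ 2 ≤ 0.276 := by nlinarith
    have hcub : s ^ 3 ≤ 0.276 * s := by nlinarith
    have h9 : Real.sin s ≥ 0.9 * s := by nlinarith
    have h93 : Real.sin s ^ 3 ≥ (0.9 * s) ^ 3 :=
      pow_le_pow_left₀ (by positivity) h9 3
    have h93' : Real.sin s ^ 3 ≥ 0.729 * s ^ 3 := by nlinarith
    have hs3 : 0 ≤ s ^ 3 := by positivity
    nlinarith

lemma abs_arg_le_chord {z : ℂ} (hz : ‖z‖ = 1)
    (hc : ‖1 - z‖ ≤ 1 / 2) :
    |z.arg| ≤ ‖1 - z‖ + ‖1 - z‖ ^ 3 := by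
  set t := |z.arg| with ht
  have ht0 : 0 ≤ t := abs_nonneg _
  have htpi : t ≤ Real.pi := Complex.abs_arg_le_pi z
  have hz0 : z ≠ 0 := by intro h; rw [h] at hz; simp at hz
  have hre : z.re = Real.cos t := by
    rw [ht, Real.cos_abs, Complex.cos_arg hz0, hz, div_one]
  have hnsq : z.re ^ 2 + z.im ^ 2 = 1 := by
    have := Complex.sq_norm z
    rw [hz, Complex.normSq_apply] at this
    nlinarith
  set c := ‖1 - z‖ with hcdef
  have hc0 : 0 ≤ c := norm_nonneg _
  have hc2 : c ^ 2 = 2 - 2 * Real.cos t := by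
    rw [hcdef, Complex.sq_norm, Complex.normSq_apply]
    simp only [Complex.sub_re, Complex.sub_im, Complex.one_re, Complex.one_im]
    nlinarith
  have hpi : 0 < Real.pi := Real.pi_pos
  have hsin0 : 0 ≤ Real.sin (t / 2) :=
    Real.sin_nonneg_of_nonneg_of_le_pi (by linarith) (by linarith)
  have hkey : c ^ 2 = (2 * Real.sin (t / 2)) ^ 2 := by
    have h1 := Real.sin_sq_add_cos_sq (t / 2)
    have h2 : Real.cos t = Real.cos (2 * (t / 2)) := by ring_nf
    rw [Real.cos_two_mul'] at h2
    nlinarith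
  have hcs : c = 2 * Real.sin (t / 2) := by
    have h := (Real.sqrt_sq hc0).symm
    rw [hkey, Real.sqrt_sq (by linarith)] at h
    exact h
  have hsin14 : Real.sin (t / 2) ≤ 1 / 4 := by rw [hcs] at hc; linarith
  have ht6 : t / 2 ≤ Real.pi / 6 := by
    by_contra hlt
    push_neg at hlt
    have h1 : Real.sin (Real.pi / 6) < Real.sin (t / 2) :=
      Real.strictMonoOn_sin ⟨by linarith, by linarith⟩ ⟨by linarith, by linarith⟩ hlt
    rw [Real.sin_pi_div_six] at h1
    linarith
  have := key_ineq (by linarith : (0:ℝ) ≤ t / 2) ht6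
  rw [hcs]
  nlinarith


lemma cs_aux (ℓ : ℝ) (hℓ : 0 < ℓ) (f : ℝ → ℝ)
    (hf : IntervalIntegrable f volume 0 ℓ)
    (hf2 : IntervalIntegrable (fun s => f s ^ 2) volume 0 ℓ) :
    (∫ s in (0:ℝ)..ℓ, f s) ^ 2 / ℓ ≤ ∫ s in (0:ℝ)..ℓ, f s ^ 2 := by
  set L : ℝ := ∫ s in (0:ℝ)..ℓ, f s with hL
  set c : ℝ := L / ℓ with hc
  have hnn : 0 ≤ ∫ s in (0:ℝ)..ℓ, (f s - c) ^ 2 :=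
    intervalIntegral.integral_nonneg hℓ.le (fun u _ => sq_nonneg _)
  have hint3 : IntervalIntegrable (fun s => f s ^ 2 - (2 * c) * f s) volume 0 ℓ :=
    hf2.sub (hf.const_mul _)
  have heq : (∫ s in (0:ℝ)..ℓ, (f s - c) ^ 2)
      = (∫ s in (0:ℝ)..ℓ, f s ^ 2) - 2 * c * L + c ^ 2 * ℓ := by
    have h1 : (∫ s in (0:ℝ)..ℓ, (f s - c) ^ 2)
        = ∫ s in (0:ℝ)..ℓ, (f s ^ 2 - (2 * c) * f s + c ^ 2) := by
      refine intervalIntegral.integral_congr (fun s _ => by ring)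
    rw [h1, intervalIntegral.integral_add hint3 intervalIntegrable_const,
      intervalIntegral.integral_sub hf2 (hf.const_mul _),
      intervalIntegral.integral_const_mul, intervalIntegral.integral_const]
    simp only [smul_eq_mul, sub_zero, ← hL]
    ring
  rw [heq] at hnn
  have key : (∫ s in (0:ℝ)..ℓ, f s ^ 2) - L ^ 2 / ℓ
      = (∫ s in (0:ℝ)..ℓ, f s ^ 2) - 2 * c * L + c ^ 2 * ℓ := by
    rw [hc]; field_simp; ring
  linarith

end EnergyAngleAux

open EnergyAngleAux in
/-- For an arclength-parametrized `H²` planar curve `γ : [0,ℓ] → ℝ²` with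
`θ = arccos⟨γ'(0), γ'(ℓ)⟩` the angle between its endpoint tangents, the elastic energy
satisfies `∫₀^ℓ ‖γ''‖² + ℓ ≥ 2θ`; indeed
`∫₀^ℓ ‖γ''‖² + ℓ ≥ (∫₀^ℓ ‖γ''‖)²/ℓ + ℓ ≥ 2 ∫₀^ℓ ‖γ''‖ ≥ 2θ`. -/
theorem energy_ge_two_angle
    (ℓ : ℝ) (hℓ : 0 < ℓ)
    (γ γ' γ'' : ℝ → EuclideanSpace ℝ (Fin 2))
    (hderiv : ∀ s ∈ Icc (0:ℝ) ℓ, HasDerivWithinAt γ (γ' s) (Icc (0:ℝ) ℓ) s)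
    (hAC : ∀ s ∈ Icc (0:ℝ) ℓ, γ' s = γ' 0 + ∫ u in (0:ℝ)..s, γ'' u)
    (hint1 : IntervalIntegrable γ'' volume 0 ℓ)
    (hint2 : IntervalIntegrable (fun s => ‖γ'' s‖ ^ 2) volume 0 ℓ)
    (hspeed : ∀ s ∈ Icc (0:ℝ) ℓ, ‖γ' s‖ = 1) :
    2 * Real.arccos ⟪γ' 0, γ' ℓ⟫ ≤ (∫ s in (0:ℝ)..ℓ, ‖γ'' s‖ ^ 2) + ℓ ∧
    (∫ s in (0:ℝ)..ℓ, ‖γ'' s‖) ^ 2 / ℓ + ℓ ≤ (∫ s in (0:ℝ)..ℓ, ‖γ'' s‖ ^ 2) + ℓ ∧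
    2 * (∫ s in (0:ℝ)..ℓ, ‖γ'' s‖) ≤ (∫ s in (0:ℝ)..ℓ, ‖γ'' s‖) ^ 2 / ℓ + ℓ ∧
    2 * Real.arccos ⟪γ' 0, γ' ℓ⟫ ≤ 2 * (∫ s in (0:ℝ)..ℓ, ‖γ'' s‖) := by
  set K : ℝ → ℝ := fun s => ‖γ'' s‖ with hK
  set L : ℝ := ∫ s in (0:ℝ)..ℓ, K s with hLdef
  set E : ℝ := ∫ s in (0:ℝ)..ℓ, ‖γ'' s‖ ^ 2 with hEdef
  -- interval integrability of K on subintervals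
  have hKint : IntervalIntegrable K volume 0 ℓ := hint1.norm
  have hKi : ∀ a b : ℝ, a ∈ Icc (0:ℝ) ℓ → b ∈ Icc (0:ℝ) ℓ →
      IntervalIntegrable K volume a b := by
    intro a b ha hb
    refine hKint.mono_set ?_
    rw [uIcc_of_le hℓ.le]
    exact uIcc_subset_Icc ha hb
  have hγi : ∀ a b : ℝ, a ∈ Icc (0:ℝ) ℓ → b ∈ Icc (0:ℝ) ℓ →
      IntervalIntegrable γ'' volume a b := by
    intro a b ha hb
    refine hint1.mono_set ?_
    rw [uIcc_of_le hℓ.le]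
    exact uIcc_subset_Icc ha hb
  -- chord bound
  have hchord : ∀ a b : ℝ, a ∈ Icc (0:ℝ) ℓ → b ∈ Icc (0:ℝ) ℓ → a ≤ b →
      ‖γ' b - γ' a‖ ≤ ∫ s in a..b, K s := by
    intro a b ha hb hab
    have hsub : γ' b - γ' a = ∫ u in a..b, γ'' u := by
      rw [hAC a ha, hAC b hb]
      rw [add_sub_add_left_eq_sub]
      exact intervalIntegral.integral_interval_sub_left
        (hγi 0 b (left_mem_Icc.2 hℓ.le) hb) (hγi 0 a (left_mem_Icc.2 hℓ.le) ha)
    rw [hsub]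
    exact intervalIntegral.norm_integral_le_integral_norm hab
  -- angle via arg
  set A : ℝ → ℝ → ℝ := fun a b => Real.arccos ⟪γ' a, γ' b⟫ with hAdef
  have habsz : ∀ s : ℝ, s ∈ Icc (0:ℝ) ℓ → ‖toC (γ' s)‖ = 1 := fun s hs =>
    abs_toC _ (hspeed s hs)
  have hAarg : ∀ a b : ℝ, a ∈ Icc (0:ℝ) ℓ → b ∈ Icc (0:ℝ) ℓ →
      A a b = |((starRingEnd ℂ) (toC (γ' a)) * toC (γ' b)).arg| := by
    intro a b ha hb
    rw [hAdef]
    simp only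
    rw [inner_toC]
    refine arccos_re_eq_abs_arg ?_
    rw [norm_mul, Complex.norm_conj, habsz a ha, habsz b hb, one_mul]
  -- triangle inequality
  have htri : ∀ a m b : ℝ, a ∈ Icc (0:ℝ) ℓ → m ∈ Icc (0:ℝ) ℓ → b ∈ Icc (0:ℝ) ℓ →
      A a b ≤ A a m + A m b := by
    intro a m b ha hm hb
    rw [hAarg a b ha hb, hAarg a m ha hm, hAarg m b hm hb]
    have hmul : (starRingEnd ℂ) (toC (γ' a)) * toC (γ' b) =
        ((starRingEnd ℂ) (toC (γ' a)) * toC (γ' m)) *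
        ((starRingEnd ℂ) (toC (γ' m)) * toC (γ' b)) := by
      have h1 : toC (γ' m) * (starRingEnd ℂ) (toC (γ' m)) = 1 := by
        rw [Complex.mul_conj]
        norm_cast
        rw [normSq_toC, hspeed m hm]
        norm_num
      calc (starRingEnd ℂ) (toC (γ' a)) * toC (γ' b)
          = (starRingEnd ℂ) (toC (γ' a)) * (toC (γ' m) * (starRingEnd ℂ) (toC (γ' m))) *
            toC (γ' b) := by rw [h1]; ring
        _ = _ := by ring
    rw [hmul]
    have hne : ∀ s : ℝ, s ∈ Icc (0:ℝ) ℓ → toC (γ' s) ≠ 0 := by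
      intro s hs h0
      have := habsz s hs
      rw [h0] at this; simp at this
    refine abs_arg_mul_le ?_ ?_
    · exact mul_ne_zero (by simpa using hne a ha) (hne m hm)
    · exact mul_ne_zero (by simpa using hne m hm) (hne b hb)
  -- base estimate
  have hbase : ∀ a b : ℝ, a ∈ Icc (0:ℝ) ℓ → b ∈ Icc (0:ℝ) ℓ → a ≤ b →
      (∫ s in a..b, K s) ≤ 1/2 →
      A a b ≤ (∫ s in a..b, K s) + (∫ s in a..b, K s) ^ 3 := by
    intro a b ha hb hab hsmall
    set I : ℝ := ∫ s in a..b, K s with hIdef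
    have hI0 : 0 ≤ I := intervalIntegral.integral_nonneg hab (fun u _ => norm_nonneg _)
    set u : ℂ := (starRingEnd ℂ) (toC (γ' a)) * toC (γ' b) with hu
    have huabs : ‖u‖ = 1 := by
      rw [hu, norm_mul, Complex.norm_conj, habsz a ha, habsz b hb, one_mul]
    have hone : ((1:ℂ) - u) = (starRingEnd ℂ) (toC (γ' a)) * (toC (γ' a) - toC (γ' b)) := by
      have h1 : (starRingEnd ℂ) (toC (γ' a)) * toC (γ' a) = 1 := by
        rw [mul_comm, Complex.mul_conj]
        norm_cast
        rw [normSq_toC, hspeed a ha]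
        norm_num
      rw [mul_sub, h1, hu]
    have hchordc : ‖1 - u‖ ≤ I := by
      rw [hone, norm_mul, Complex.norm_conj, habsz a ha, one_mul, ← toC_sub]
      have h2 : ‖toC (γ' a - γ' b)‖ = ‖γ' a - γ' b‖ := by
        have := normSq_toC (γ' a - γ' b)
        rw [Complex.norm_def, this, Real.sqrt_sq (norm_nonneg _)]
      rw [h2, norm_sub_rev]
      exact hchord a b ha hb hab
    have hc0 : 0 ≤ ‖1 - u‖ := norm_nonneg _
    have := abs_arg_le_chord huabs (le_trans hchordc hsmall)
    rw [hAarg a b ha hb, ← hu]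
    calc |u.arg| ≤ ‖1 - u‖ + ‖1 - u‖ ^ 3 := this
      _ ≤ I + I ^ 3 := by
          have : ‖1 - u‖ ^ 3 ≤ I ^ 3 := pow_le_pow_left₀ hc0 hchordc 3
          linarith
  -- main induction
  have hmain : ∀ ε : ℝ, 0 < ε → ε ≤ 1/2 → ∀ n : ℕ, ∀ a b : ℝ,
      a ∈ Icc (0:ℝ) ℓ → b ∈ Icc (0:ℝ) ℓ → a ≤ b → (∫ s in a..b, K s) ≤ n * ε →
      A a b ≤ (1 + ε^2) * ∫ s in a..b, K s := by
    intro ε hε hε2 n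
    induction n with
    | zero =>
      intro a b ha hb hab hn
      have hI0 : 0 ≤ ∫ s in a..b, K s :=
        intervalIntegral.integral_nonneg hab (fun u _ => norm_nonneg _)
      have hI : (∫ s in a..b, K s) = 0 := le_antisymm (by simpa using hn) hI0
      have := hbase a b ha hb hab (by rw [hI]; norm_num)
      rw [hI] at this ⊢
      simpa using this
    | succ n ih =>
      intro a b ha hb hab hn
      have hI0 : 0 ≤ ∫ s in a..b, K s :=
        intervalIntegral.integral_nonneg hab (fun u _ => norm_nonneg _)
      by_cases hIε : (∫ s in a..b, K s) ≤ ε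
      · have h1 := hbase a b ha hb hab (le_trans hIε hε2)
        have hsq : (∫ s in a..b, K s) ^ 2 ≤ ε ^ 2 := pow_le_pow_left₀ hI0 hIε 2
        have hcube : (∫ s in a..b, K s) ^ 3 ≤ ε ^ 2 * ∫ s in a..b, K s := by
          calc (∫ s in a..b, K s) ^ 3 = (∫ s in a..b, K s) ^ 2 * ∫ s in a..b, K s := by ring
            _ ≤ ε ^ 2 * ∫ s in a..b, K s := mul_le_mul_of_nonneg_right hsq hI0
        linarith
      · push_neg at hIε
        have hF : ContinuousOn (fun x => ∫ s in a..x, K s) (Icc a b) := by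
          have h := intervalIntegral.continuousOn_primitive_interval'
            (hKi a b ha hb) (left_mem_uIcc (a := a) (b := b))
          rwa [uIcc_of_le hab] at h
        have hivt := intermediate_value_Icc hab hF
        have hmem : ε ∈ Icc ((fun x => ∫ s in a..x, K s) a) ((fun x => ∫ s in a..x, K s) b) := by
          simp only [intervalIntegral.integral_same]
          exact ⟨hε.le, hIε.le⟩
        obtain ⟨m, hmI, hmε⟩ := hivt hmem
        simp only at hmε
        have hmIc : m ∈ Icc (0:ℝ) ℓ := ⟨le_trans ha.1 hmI.1, le_trans hmI.2 hb.2⟩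
        have hsplit : (∫ s in a..b, K s) = (∫ s in a..m, K s) + ∫ s in m..b, K s :=
          (intervalIntegral.integral_add_adjacent_intervals
            (hKi a m ha hmIc) (hKi m b hmIc hb)).symm
        have hrest : (∫ s in m..b, K s) ≤ n * ε := by
          rw [hsplit, hmε] at hn
          push_cast at hn ⊢
          linarith
        have h1 := hbase a m ha hmIc hmI.1 (by rw [hmε]; linarith)
        have h2 := ih m b hmIc hb hmI.2 hrest
        have h3 := htri a m b ha hmIc hb
        rw [hmε] at h1
        rw [hsplit, hmε]
        have hr0 : 0 ≤ ∫ s in m..b, K s :=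
          intervalIntegral.integral_nonneg hmI.2 (fun u _ => norm_nonneg _)
        nlinarith [h1, h2, h3]
  -- conclusion: A 0 ℓ ≤ L
  have hL0 : 0 ≤ L := intervalIntegral.integral_nonneg hℓ.le (fun u _ => norm_nonneg _)
  have hmem0 : (0:ℝ) ∈ Icc (0:ℝ) ℓ := left_mem_Icc.2 hℓ.le
  have hmemℓ : ℓ ∈ Icc (0:ℝ) ℓ := right_mem_Icc.2 hℓ.le
  have hangle : A 0 ℓ ≤ L := by
    refine le_of_forall_pos_le_add ?_
    intro δ hδ
    set ε : ℝ := min (1/2) (Real.sqrt (δ / (L + 1))) with hεdef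
    have hεpos : 0 < ε := lt_min (by norm_num) (Real.sqrt_pos.2 (by positivity))
    have hεhalf : ε ≤ 1/2 := min_le_left _ _
    have hεsq : ε ^ 2 ≤ δ / (L + 1) := by
      have h1 : ε ≤ Real.sqrt (δ / (L + 1)) := min_le_right _ _
      have h2 : ε ^ 2 ≤ Real.sqrt (δ / (L + 1)) ^ 2 := pow_le_pow_left₀ hεpos.le h1 2
      rwa [Real.sq_sqrt (by positivity)] at h2
    set n : ℕ := ⌈L / ε⌉₊ with hn
    have hLn : L ≤ n * ε := by
      have h1 : L / ε ≤ (n : ℝ) := Nat.le_ceil _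
      calc L = (L / ε) * ε := by field_simp
        _ ≤ (n : ℝ) * ε := by
            exact mul_le_mul_of_nonneg_right h1 hεpos.le
    have h := hmain ε hεpos hεhalf n 0 ℓ hmem0 hmemℓ hℓ.le (by rw [← hLdef]; exact hLn)
    rw [← hLdef] at h
    have hfin : (1 + ε ^ 2) * L ≤ L + δ := by
      have h2 : ε ^ 2 * L ≤ δ / (L + 1) * L := mul_le_mul_of_nonneg_right hεsq hL0
      have h3 : δ / (L + 1) * L ≤ δ := by
        rw [div_mul_eq_mul_div, div_le_iff₀ (by linarith)]
        nlinarith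
      nlinarith
    linarith
  -- Cauchy-Schwarz: L^2 / ℓ ≤ E
  have hCS : L ^ 2 / ℓ ≤ E := by
    rw [hLdef, hEdef]
    exact cs_aux ℓ hℓ K hKint hint2
  -- AM-GM: 2L ≤ L^2/ℓ + ℓ
  have hAM : 2 * L ≤ L ^ 2 / ℓ + ℓ := by
    rw [div_add' _ _ _ (ne_of_gt hℓ), le_div_iff₀ hℓ]
    nlinarith [sq_nonneg (L - ℓ)]
  refine ⟨?_, ?_, ?_, ?_⟩
  · have : A 0 ℓ ≤ L := hangle
    calc 2 * Real.arccos ⟪γ' 0, γ' ℓ⟫ = 2 * A 0 ℓ := rfl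
      _ ≤ 2 * L := by linarith
      _ ≤ L ^ 2 / ℓ + ℓ := hAM
      _ ≤ E + ℓ := by linarith [hCS]
  · linarith [hCS]
  · exact hAM
  · calc 2 * Real.arccos ⟪γ' 0, γ' ℓ⟫ = 2 * A 0 ℓ := rfl
      _ ≤ 2 * L := by linarith [hangle]
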